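/- arXiv:1201.2467 — 2 statements merged into one kernel-verified Lean document; each statement's English description precedes it below -/
import Mathlib

section
/- If p is robust against multiple mutations, then p admits a uniform invasion barrier: there exists ε̄ ∈ (0,1) such that for every m and all mutations r¹,...,rᵐ ≠ p with proportions ε₁,...,εₘ ∈ (0, ε̄/m], the payoff u(p,w) exceeds u(rⁱ,w) for every i, where w = Σᵢεᵢrⁱ + (1-Σεᵢ)p. -/
open Finset Set

noncomputable section

/-- The probability simplex in ℝᵏ. -/
def Δ' (k : ℕ) : Set (Fin k → ℝ) := stdSimplex ℝ (Fin k)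

/-- Affine payoff determined by the matrix `U`. -/
def payoff {k : ℕ} (U : Fin k → Fin k → ℝ) (p q : Fin k → ℝ) : ℝ :=
  ∑ i, ∑ j, p i * q j * U i j

/-- The pure strategy `eⁱ`. -/
def pure' {k : ℕ} (i : Fin k) : Fin k → ℝ := fun j => if j = i then 1 else 0

/-- Population state when mutations `r i` appear in proportions `ε i` against incumbent `p`. -/
def mix {k m : ℕ} (p : Fin k → ℝ) (r : Fin m → Fin k → ℝ) (ε : Fin m → ℝ) : Fin k → ℝ :=
  fun j => (∑ i, ε i * r i j) + (1 - ∑ i, ε i) * p j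

/-- Evolutionarily stable strategy (ESS). -/
def IsESS {k : ℕ} (U : Fin k → Fin k → ℝ) (p : Fin k → ℝ) : Prop :=
  p ∈ Δ' k ∧ ∀ r ∈ Δ' k, r ≠ p → ∃ e ∈ Set.Ioo (0:ℝ) 1, ∀ ε : ℝ, 0 < ε → ε ≤ e →
    payoff U p (fun j => ε * r j + (1 - ε) * p j) >
      payoff U r (fun j => ε * r j + (1 - ε) * p j)

/-- Evolutionary stability against `m` mutations. -/
def StableAgainst {k : ℕ} (U : Fin k → Fin k → ℝ) (m : ℕ) (p : Fin k → ℝ) : Prop :=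
  ∀ r : Fin m → Fin k → ℝ, (∀ i, r i ∈ Δ' k) → (∀ i, r i ≠ p) →
    ∃ e ∈ Set.Ioo (0:ℝ) 1, ∀ ε : Fin m → ℝ, (∀ i, ε i ∈ Set.Ioc (0:ℝ) e) →
      ∀ i, payoff U p (mix p r ε) > payoff U (r i) (mix p r ε)

/-- `e` is a uniform invasion barrier for `p` against `m` mutations. -/
def UniformBarrier {k : ℕ} (U : Fin k → Fin k → ℝ) (m : ℕ) (p : Fin k → ℝ) (e : ℝ) : Prop :=
  ∀ r : Fin m → Fin k → ℝ, (∀ i, r i ∈ Δ' k) → (∀ i, r i ≠ p) →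
    ∀ ε : Fin m → ℝ, (∀ i, ε i ∈ Set.Ioc (0:ℝ) e) →
      ∀ i, payoff U p (mix p r ε) > payoff U (r i) (mix p r ε)

/-- Best responses to `p`. -/
def BR {k : ℕ} (U : Fin k → Fin k → ℝ) (p : Fin k → ℝ) : Set (Fin k → ℝ) :=
  {q ∈ Δ' k | ∀ r ∈ Δ' k, payoff U r p ≤ payoff U q p}

/-- Local dominance. -/
def LocallyDominant {k : ℕ} (U : Fin k → Fin k → ℝ) (p : Fin k → ℝ) : Prop :=
  ∃ V ∈ nhdsWithin p (Δ' k), V ⊆ Δ' k ∧ ∀ s ∈ V, s ≠ p → ∀ r ∈ V, r ≠ p →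
    payoff U p r ≥ payoff U s r ∧ payoff U p r > payoff U r r

/-- Strict local dominance. -/
def StrictlyLocallyDominant {k : ℕ} (U : Fin k → Fin k → ℝ) (p : Fin k → ℝ) : Prop :=
  ∃ V ∈ nhdsWithin p (Δ' k), V ⊆ Δ' k ∧ ∀ s ∈ V, s ≠ p → ∀ r ∈ V, r ≠ p →
    payoff U p r > payoff U s r

section AuxLemmas

variable {k m : ℕ}

lemma payoff_pure_left (U : Fin k → Fin k → ℝ) (j : Fin k) (q : Fin k → ℝ) :
    payoff U (pure' j) q = ∑ x, q x * U j x := by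
  unfold payoff pure'
  rw [Finset.sum_eq_single j]
  · exact Finset.sum_congr rfl fun x _ => by simp
  · intro i _ hij
    exact Finset.sum_eq_zero fun x _ => by simp [hij]
  · intro hj; exact absurd (Finset.mem_univ j) hj

lemma payoff_pure_right (U : Fin k → Fin k → ℝ) (s : Fin k → ℝ) (j : Fin k) :
    payoff U s (pure' j) = ∑ i, s i * U i j := by
  unfold payoff pure'
  refine Finset.sum_congr rfl fun i _ => ?_
  rw [Finset.sum_eq_single j]
  · simp
  · intro x _ hxj; simp [hxj]
  · intro hj; exact absurd (Finset.mem_univ j) hj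

lemma payoff_left_sum (U : Fin k → Fin k → ℝ) (s q : Fin k → ℝ) :
    payoff U s q = ∑ j, s j * payoff U (pure' j) q := by
  simp only [payoff_pure_left]
  unfold payoff
  refine Finset.sum_congr rfl fun j _ => ?_
  rw [Finset.mul_sum]
  exact Finset.sum_congr rfl fun x _ => by ring

lemma payoff_right_sum (U : Fin k → Fin k → ℝ) (s q : Fin k → ℝ) :
    payoff U s q = ∑ j, q j * payoff U s (pure' j) := by
  simp only [payoff_pure_right]
  unfold payoff
  rw [Finset.sum_comm]
  refine Finset.sum_congr rfl fun x _ => ?_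
  rw [Finset.mul_sum]
  exact Finset.sum_congr rfl fun i _ => by ring

lemma payoff_mix (U : Fin k → Fin k → ℝ) (p s : Fin k → ℝ) (r : Fin m → Fin k → ℝ)
    (ε : Fin m → ℝ) :
    payoff U s (mix p r ε)
      = payoff U s p + ∑ l, ε l * (payoff U s (r l) - payoff U s p) := by
  have hptwise : ∀ i x, s i * (mix p r ε x) * U i x
      = s i * p x * U i x + ∑ l, ε l * (s i * r l x * U i x - s i * p x * U i x) := by
    intro i x
    have h1 : ∑ l, ε l * (s i * r l x * U i x - s i * p x * U i x)
        = (∑ l, ε l * r l x) * (s i * U i x) - (∑ l, ε l) * (s i * p x * U i x) := by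
      simp only [mul_sub]
      rw [Finset.sum_sub_distrib, Finset.sum_mul, Finset.sum_mul]
      congr 1 <;> exact Finset.sum_congr rfl fun l _ => by ring
    rw [h1]
    show s i * ((∑ l, ε l * r l x) + (1 - ∑ l, ε l) * p x) * U i x = _
    ring
  unfold payoff
  calc ∑ i, ∑ x, s i * (mix p r ε x) * U i x
      = ∑ i, ∑ x, (s i * p x * U i x
          + ∑ l, ε l * (s i * r l x * U i x - s i * p x * U i x)) :=
        Finset.sum_congr rfl fun i _ => Finset.sum_congr rfl fun x _ => hptwise i x
    _ = (∑ i, ∑ x, s i * p x * U i x)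
          + ∑ i, ∑ x, ∑ l, ε l * (s i * r l x * U i x - s i * p x * U i x) := by
        rw [← Finset.sum_add_distrib]
        exact Finset.sum_congr rfl fun i _ => by rw [← Finset.sum_add_distrib]
    _ = (∑ i, ∑ x, s i * p x * U i x)
          + ∑ l, ∑ i, ∑ x, ε l * (s i * r l x * U i x - s i * p x * U i x) := by
        congr 1
        calc ∑ i, ∑ x, ∑ l, ε l * (s i * r l x * U i x - s i * p x * U i x)
            = ∑ i, ∑ l, ∑ x, ε l * (s i * r l x * U i x - s i * p x * U i x) :=
              Finset.sum_congr rfl fun i _ => Finset.sum_comm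
          _ = ∑ l, ∑ i, ∑ x, ε l * (s i * r l x * U i x - s i * p x * U i x) :=
              Finset.sum_comm
    _ = (∑ i, ∑ x, s i * p x * U i x)
          + ∑ l, ε l * ((∑ i, ∑ x, s i * r l x * U i x) - ∑ i, ∑ x, s i * p x * U i x) := by
        congr 1
        refine Finset.sum_congr rfl fun l _ => ?_
        rw [mul_sub, Finset.mul_sum, Finset.mul_sum, ← Finset.sum_sub_distrib]
        refine Finset.sum_congr rfl fun i _ => ?_
        rw [Finset.mul_sum, Finset.mul_sum, ← Finset.sum_sub_distrib]
        exact Finset.sum_congr rfl fun x _ => by rw [mul_sub]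
lemma pure'_mem (j : Fin k) : pure' j ∈ Δ' k := by
  constructor
  · intro x
    unfold pure'
    split <;> norm_num
  · show ∑ x, pure' j x = 1
    unfold pure'
    rw [Finset.sum_ite_eq' Finset.univ j (fun _ => (1:ℝ))]
    simp

lemma exists_good_coord {p q : Fin k → ℝ} (hq : q ∈ Δ' k) (hqp : q ≠ p) :
    ∃ j, 0 < q j ∧ pure' j ≠ p := by
  by_contra hcon
  push_neg at hcon
  have hq1 : ∑ x, q x = 1 := hq.2
  have hq0 : ∀ x, 0 ≤ q x := hq.1
  obtain ⟨j₀, hj₀⟩ : ∃ j, 0 < q j := by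
    by_contra hno
    push_neg at hno
    have : ∑ x, q x ≤ 0 := Finset.sum_nonpos fun x _ => hno x
    linarith
  have hpj₀ : pure' j₀ = p := hcon j₀ hj₀
  have hzero : ∀ x, x ≠ j₀ → q x = 0 := by
    intro x hx
    by_contra hqx
    have hqxpos : 0 < q x := lt_of_le_of_ne (hq0 x) (Ne.symm hqx)
    have hpx : pure' x = p := hcon x hqxpos
    have : pure' x x = pure' j₀ x := by rw [hpx, hpj₀]
    unfold pure' at this
    simp [hx] at this
  apply hqp
  have hqj₀ : q j₀ = 1 := by
    rw [← hq1, Finset.sum_eq_single j₀]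
    · intro x _ hx; exact hzero x hx
    · intro hj; exact absurd (Finset.mem_univ j₀) hj
  funext x
  rw [← hpj₀]
  unfold pure'
  by_cases hx : x = j₀
  · subst hx; simp [hqj₀]
  · simp [hx, hzero x hx]

lemma extract1 {A X Y e : ℝ} (he : 0 < e)
    (H : ∀ ε₀ ε₁ : ℝ, 0 < ε₀ → ε₀ ≤ e → 0 < ε₁ → ε₁ ≤ e → 0 < A + ε₀ * X + ε₁ * Y) :
    0 ≤ A := by
  by_contra hA
  push_neg at hA
  set c : ℝ := |X| + |Y| + 1 with hc
  have hcpos : 0 < c := by positivity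
  set ε : ℝ := min e (-A / (2 * c)) with hε
  have hεpos : 0 < ε := lt_min he (div_pos (by linarith) (by positivity))
  have hεe : ε ≤ e := min_le_left _ _
  have h2 := H ε ε hεpos hεe hεpos hεe
  have h3 : ε * (2 * c) ≤ -A := by
    have := min_le_right e (-A / (2 * c))
    calc ε * (2 * c) ≤ (-A / (2 * c)) * (2 * c) := by
          apply mul_le_mul_of_nonneg_right this (by positivity)
      _ = -A := by field_simp
  have hXY : ε * X + ε * Y ≤ ε * (|X| + |Y|) := by
    have h4 : X ≤ |X| := le_abs_self X
    have h5 : Y ≤ |Y| := le_abs_self Y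
    nlinarith
  nlinarith [abs_nonneg X, abs_nonneg Y]

lemma extract2 {X Y e : ℝ} (he : 0 < e)
    (H : ∀ ε₀ ε₁ : ℝ, 0 < ε₀ → ε₀ ≤ e → 0 < ε₁ → ε₁ ≤ e → 0 < ε₀ * X + ε₁ * Y) :
    0 ≤ Y := by
  by_contra hY
  push_neg at hY
  set c : ℝ := |X| + 1 with hc
  have hcpos : 0 < c := by positivity
  set ε₀ : ℝ := min e (e * (-Y) / (2 * c)) with hε
  have hεpos : 0 < ε₀ := lt_min he (div_pos (by nlinarith) (by positivity))
  have hεe : ε₀ ≤ e := min_le_left _ _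
  have h2 := H ε₀ e hεpos hεe he le_rfl
  have h3 : ε₀ * (2 * c) ≤ e * (-Y) := by
    have := min_le_right e (e * (-Y) / (2 * c))
    calc ε₀ * (2 * c) ≤ (e * (-Y) / (2 * c)) * (2 * c) := by
          apply mul_le_mul_of_nonneg_right this (by positivity)
      _ = e * (-Y) := by field_simp
  have hX : ε₀ * X ≤ ε₀ * |X| := by
    have := le_abs_self X
    nlinarith
  nlinarith [abs_nonneg X]
end AuxLemmas
theorem stmt_11 {k : ℕ} (U : Fin k → Fin k → ℝ) (p : Fin k → ℝ) (hp : p ∈ Δ' k)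
    (h : ∀ m : ℕ, 2 ≤ m → StableAgainst U m p) :
    ∃ e ∈ Set.Ioo (0:ℝ) 1, ∀ m : ℕ, 0 < m →
      ∀ r : Fin m → Fin k → ℝ, (∀ i, r i ∈ Δ' k) → (∀ i, r i ≠ p) →
        ∀ ε : Fin m → ℝ, (∀ i, ε i ∈ Set.Ioc (0:ℝ) (e / m)) →
          ∀ i, payoff U p (mix p r ε) > payoff U (r i) (mix p r ε) := by
  classical
  obtain ⟨D, hDdef⟩ : ∃ D : Fin k → (Fin k → ℝ) → ℝ,
      D = fun j q => payoff U p q - payoff U (pure' j) q := ⟨_, rfl⟩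
  obtain ⟨a, hadef⟩ : ∃ a : Fin k → ℝ, a = fun j => D j p := ⟨_, rfl⟩
  -- two-mutation consequence
  have key : ∀ j : Fin k, pure' j ≠ p → ∀ q, q ∈ Δ' k → q ≠ p →
      ∃ e : ℝ, 0 < e ∧ ∀ ε₀ ε₁ : ℝ, 0 < ε₀ → ε₀ ≤ e → 0 < ε₁ → ε₁ ≤ e →
        0 < a j + ε₀ * (D j (pure' j) - a j) + ε₁ * (D j q - a j) := by
    intro j hj q hq hqp
    obtain ⟨e, he, He⟩ := h 2 le_rfl ![pure' j, q]
      (by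
        intro i
        fin_cases i
        · simpa using pure'_mem j
        · simpa using hq)
      (by
        intro i
        fin_cases i
        · simpa using hj
        · simpa using hqp)
    refine ⟨e, he.1, ?_⟩
    intro ε₀ ε₁ h₀ h₀e h₁ h₁e
    have hineq := He ![ε₀, ε₁]
      (by
        intro i
        fin_cases i
        · simpa using And.intro h₀ h₀e
        · simpa using And.intro h₁ h₁e) 0
    have hgt : 0 < payoff U p (mix p ![pure' j, q] ![ε₀, ε₁])
        - payoff U (pure' j) (mix p ![pure' j, q] ![ε₀, ε₁]) := by
      have : (![pure' j, q] : Fin 2 → Fin k → ℝ) 0 = pure' j := rfl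
      rw [← this]
      exact sub_pos.mpr hineq
    have e0 := payoff_mix U p p (![pure' j, q]) (![ε₀, ε₁])
    have e1 := payoff_mix U p (pure' j) (![pure' j, q]) (![ε₀, ε₁])
    rw [Fin.sum_univ_two] at e0 e1
    simp only [Matrix.cons_val_zero, Matrix.cons_val_one, Matrix.head_cons] at e0 e1
    simp only [hDdef, hadef]
    rw [e0, e1] at hgt
    ring_nf at hgt ⊢
    linarith [hgt]
  have F1 : ∀ j, pure' j ≠ p → 0 ≤ a j := by
    intro j hj
    obtain ⟨e, he, H⟩ := key j hj (pure' j) (pure'_mem j) hj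
    exact extract1 he H
  have F3 : ∀ j, pure' j ≠ p → a j ≤ 0 → 0 < D j (pure' j) := by
    intro j hj ha
    have ha0 : a j = 0 := le_antisymm ha (F1 j hj)
    obtain ⟨e, he, H⟩ := key j hj (pure' j) (pure'_mem j) hj
    have := H e e he le_rfl he le_rfl
    rw [ha0] at this
    nlinarith
  have F2 : ∀ j, pure' j ≠ p → a j ≤ 0 → ∀ q, q ∈ Δ' k → q ≠ p → 0 ≤ D j q := by
    intro j hj ha q hq hqp
    have ha0 : a j = 0 := le_antisymm ha (F1 j hj)
    obtain ⟨e, he, H⟩ := key j hj q hq hqp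
    have hY : 0 ≤ D j q - a j := by
      refine extract2 (X := D j (pure' j) - a j) he ?_
      intro ε₀ ε₁ u1 u2 u3 u4
      have hh := H ε₀ ε₁ u1 u2 u3 u4
      linarith
    linarith
  have hne : (Finset.univ : Finset (Fin k)).Nonempty := by
    by_contra hcon
    rw [Finset.not_nonempty_iff_eq_empty] at hcon
    have h1 : ∑ x, p x = 1 := hp.2
    rw [hcon, Finset.sum_empty] at h1
    norm_num at h1
  obtain ⟨C, hCdef⟩ : ∃ C : ℝ, C = 1 + ∑ j, ∑ j', |D j (pure' j') - a j| := ⟨_, rfl⟩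
  have hC : 0 < C := by
    have h0 : (0:ℝ) ≤ ∑ j, ∑ j', |D j (pure' j') - a j| :=
      Finset.sum_nonneg fun j _ => Finset.sum_nonneg fun j' _ => abs_nonneg _
    simp only [hCdef]
    linarith
  have hDa_pure : ∀ j j', |D j (pure' j') - a j| ≤ C - 1 := by
    intro j j'
    have h1 : |D j (pure' j') - a j| ≤ ∑ j'', |D j (pure' j'') - a j| :=
      Finset.single_le_sum (f := fun j'' => |D j (pure' j'') - a j|)
        (fun x _ => abs_nonneg _) (Finset.mem_univ j')
    have h2 : ∑ j'', |D j (pure' j'') - a j| ≤ ∑ jj, ∑ j'', |D jj (pure' j'') - a jj| :=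
      Finset.single_le_sum (f := fun jj => ∑ j'', |D jj (pure' j'') - a jj|)
        (fun x _ => Finset.sum_nonneg fun _ _ => abs_nonneg _)
        (Finset.mem_univ j)
    simp only [hCdef]
    linarith
  have hDexp : ∀ j (q : Fin k → ℝ), D j q = ∑ j', q j' * D j (pure' j') := by
    intro j q
    simp only [hDdef]
    rw [payoff_right_sum U p q, payoff_right_sum U (pure' j) q, ← Finset.sum_sub_distrib]
    exact Finset.sum_congr rfl fun j' _ => by ring
  have hDq : ∀ j q, q ∈ Δ' k → |D j q - a j| ≤ C := by
    intro j q hq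
    have hsum1 : ∑ j', q j' = 1 := hq.2
    have hexp : D j q - a j = ∑ j', q j' * (D j (pure' j') - a j) := by
      rw [hDexp j q]
      calc (∑ j', q j' * D j (pure' j')) - a j
          = (∑ j', q j' * D j (pure' j')) - (∑ j', q j') * a j := by rw [hsum1, one_mul]
        _ = ∑ j', (q j' * D j (pure' j') - q j' * a j) := by
            rw [Finset.sum_sub_distrib, Finset.sum_mul]
        _ = ∑ j', q j' * (D j (pure' j') - a j) :=
            Finset.sum_congr rfl fun j' _ => by ring
    calc |D j q - a j| = |∑ j', q j' * (D j (pure' j') - a j)| := by rw [hexp]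
      _ ≤ ∑ j', |q j' * (D j (pure' j') - a j)| := Finset.abs_sum_le_sum_abs _ _
      _ ≤ ∑ j', q j' * (C - 1) := Finset.sum_le_sum fun j' _ => by
            rw [abs_mul, abs_of_nonneg (hq.1 j')]
            exact mul_le_mul_of_nonneg_left (hDa_pure j j') (hq.1 j')
      _ = C - 1 := by rw [← Finset.sum_mul, hsum1, one_mul]
      _ ≤ C := by linarith
  obtain ⟨A, hAdef⟩ : ∃ A : ℝ,
      A = Finset.univ.inf' hne (fun j => if 0 < a j then a j else 1) := ⟨_, rfl⟩
  have hA : 0 < A := by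
    rw [hAdef, Finset.lt_inf'_iff]
    intro j _
    split
    · assumption
    · norm_num
  have hAle : ∀ j, 0 < a j → A ≤ a j := by
    intro j hj
    have h1 := Finset.inf'_le (fun j => if 0 < a j then a j else 1) (Finset.mem_univ j)
    rw [if_pos hj] at h1
    rw [hAdef]
    exact h1
  obtain ⟨ebar, hedef⟩ : ∃ eb : ℝ, eb = min (1/2) (A / (2 * C)) := ⟨_, rfl⟩
  have heb_pos : 0 < ebar := hedef ▸ lt_min (by norm_num) (div_pos hA (by linarith))
  have heb_lt1 : ebar < 1 := hedef ▸ lt_of_le_of_lt (min_le_left _ _) (by norm_num)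
  have hebC : ebar * C ≤ A / 2 := by
    have h1 : ebar ≤ A / (2 * C) := hedef ▸ min_le_right _ _
    calc ebar * C ≤ (A / (2 * C)) * C := mul_le_mul_of_nonneg_right h1 hC.le
      _ = A / 2 := by field_simp
  refine ⟨ebar, ⟨heb_pos, heb_lt1⟩, ?_⟩
  intro m hm r hr hrp ε hε i
  have hε_pos : ∀ l, 0 < ε l := fun l => (hε l).1
  have hε_le : ∀ l, ε l ≤ ebar / m := fun l => (hε l).2
  have hm0 : (0:ℝ) < (m:ℝ) := by exact_mod_cast hm
  have hsum_ε : ∑ l, ε l ≤ ebar := by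
    calc ∑ l, ε l ≤ ∑ _l : Fin m, ebar / m := Finset.sum_le_sum fun l _ => hε_le l
      _ = m * (ebar / m) := by
          rw [Finset.sum_const, Finset.card_univ, Fintype.card_fin, nsmul_eq_mul]
      _ = ebar := by field_simp
  obtain ⟨T, hTdef⟩ : ∃ T : Fin k → ℝ,
      T = fun j => a j + ∑ l, ε l * (D j (r l) - a j) := ⟨_, rfl⟩
  have hDw : ∀ j, payoff U p (mix p r ε) - payoff U (pure' j) (mix p r ε) = T j := by
    intro j
    rw [payoff_mix U p p r ε, payoff_mix U p (pure' j) r ε]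
    have hc : ∑ l, ε l * ((payoff U p (r l) - payoff U (pure' j) (r l))
          - (payoff U p p - payoff U (pure' j) p))
        = (∑ l, ε l * (payoff U p (r l) - payoff U p p))
          - ∑ l, ε l * (payoff U (pure' j) (r l) - payoff U (pure' j) p) := by
      rw [← Finset.sum_sub_distrib]
      exact Finset.sum_congr rfl fun l _ => by ring
    simp only [hTdef, hDdef, hadef]
    linarith [hc]
  have hgoal_eq : payoff U p (mix p r ε) - payoff U (r i) (mix p r ε) = ∑ j, r i j * T j := by
    have e2 := payoff_left_sum U (r i) (mix p r ε)
    have e3 : payoff U p (mix p r ε) = ∑ j, r i j * payoff U p (mix p r ε) := by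
      rw [← Finset.sum_mul, (hr i).2, one_mul]
    calc payoff U p (mix p r ε) - payoff U (r i) (mix p r ε)
        = (∑ j, r i j * payoff U p (mix p r ε))
          - ∑ j, r i j * payoff U (pure' j) (mix p r ε) := by rw [← e3, ← e2]
      _ = ∑ j, (r i j * payoff U p (mix p r ε)
          - r i j * payoff U (pure' j) (mix p r ε)) := by rw [Finset.sum_sub_distrib]
      _ = ∑ j, r i j * T j := Finset.sum_congr rfl fun j _ => by rw [← hDw j]; ring
  have hT_N : ∀ j, pure' j ≠ p → a j ≤ 0 → ε i * D j (r i) ≤ T j := by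
    intro j hj ha
    have ha0 : a j = 0 := le_antisymm ha (F1 j hj)
    have hTeq : T j = ∑ l, ε l * D j (r l) := by
      simp only [hTdef]
      rw [ha0]
      simp
    rw [hTeq]
    exact Finset.single_le_sum
      (fun l _ => mul_nonneg (hε_pos l).le (F2 j hj ha (r l) (hr l) (hrp l)))
      (Finset.mem_univ i)
  have hT_P : ∀ j, 0 < a j → 0 < T j := by
    intro j hja
    have h4 : ∑ l, ε l * (-C) ≤ ∑ l, ε l * (D j (r l) - a j) := by
      refine Finset.sum_le_sum fun l _ => mul_le_mul_of_nonneg_left ?_ (hε_pos l).le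
      have h5 := abs_le.mp (hDq j (r l) (hr l))
      linarith [h5.1]
    have h5 : ∑ l, ε l * (-C) = -((∑ l, ε l) * C) := by rw [← Finset.sum_mul]; ring
    have h6 : (∑ l, ε l) * C ≤ ebar * C := mul_le_mul_of_nonneg_right hsum_ε hC.le
    have h7 : A ≤ a j := hAle j hja
    simp only [hTdef]
    linarith [h4, h5, h6, h7, hebC]
  have hT_p0 : ∀ j, pure' j = p → T j = 0 := by
    intro j hj
    have hD0 : ∀ q : Fin k → ℝ, D j q = 0 := fun q => by simp [hDdef, hj]
    simp [hTdef, hadef, hD0]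
  have hT0 : ∀ j, 0 ≤ T j := by
    intro j
    by_cases hj : pure' j = p
    · rw [hT_p0 j hj]
    · by_cases hja : 0 < a j
      · exact (hT_P j hja).le
      · push_neg at hja
        exact le_trans (mul_nonneg (hε_pos i).le (F2 j hj hja (r i) (hr i) (hrp i)))
          (hT_N j hj hja)
  rw [gt_iff_lt, ← sub_pos, hgoal_eq]
  by_cases hcase : ∃ j, 0 < r i j ∧ pure' j ≠ p ∧ 0 < a j
  · obtain ⟨j₀, hj₀r, hj₀p, hj₀a⟩ := hcase
    exact Finset.sum_pos' (fun j _ => mul_nonneg ((hr i).1 j) (hT0 j))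
      ⟨j₀, Finset.mem_univ j₀, mul_pos hj₀r (hT_P j₀ hj₀a)⟩
  · push_neg at hcase
    obtain ⟨j₀, hj₀r, hj₀p⟩ := exists_good_coord (hr i) (hrp i)
    have hj₀a : a j₀ ≤ 0 := hcase j₀ hj₀r hj₀p
    have hstep : ∑ j, r i j * (ε i * D j (r i)) ≤ ∑ j, r i j * T j := by
      refine Finset.sum_le_sum fun j _ => ?_
      by_cases hrj : 0 < r i j
      · by_cases hj : pure' j = p
        · rw [hT_p0 j hj]
          simp [hDdef, hj]
        · exact mul_le_mul_of_nonneg_left (hT_N j hj (hcase j hrj hj)) ((hr i).1 j)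
      · have h0 : r i j = 0 := le_antisymm (not_lt.mp hrj) ((hr i).1 j)
        simp [h0]
    have hDri_pos : 0 < D j₀ (r i) := by
      rw [hDexp j₀ (r i)]
      refine Finset.sum_pos' (fun j' _ => mul_nonneg ((hr i).1 j') ?_)
        ⟨j₀, Finset.mem_univ j₀, mul_pos hj₀r (F3 j₀ hj₀p hj₀a)⟩
      by_cases hj' : pure' j' = p
      · rw [hj']
        have h0 : a j₀ = 0 := le_antisymm hj₀a (F1 j₀ hj₀p)
        have h1 : D j₀ p = 0 := by simpa [hadef] using h0
        rw [h1]
      · exact F2 j₀ hj₀p hj₀a (pure' j') (pure'_mem j') hj'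
    have hfinal : 0 < ∑ j, r i j * D j (r i) := by
      refine Finset.sum_pos' (fun j _ => ?_) ⟨j₀, Finset.mem_univ j₀, mul_pos hj₀r hDri_pos⟩
      by_cases hrj : 0 < r i j
      · refine mul_nonneg ((hr i).1 j) ?_
        by_cases hj : pure' j = p
        · simp [hDdef, hj]
        · exact F2 j hj (hcase j hrj hj) (r i) (hr i) (hrp i)
      · have h0 : r i j = 0 := le_antisymm (not_lt.mp hrj) ((hr i).1 j)
        simp [h0]
    calc (0:ℝ) < ε i * ∑ j, r i j * D j (r i) := mul_pos (hε_pos i) hfinal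
      _ = ∑ j, r i j * (ε i * D j (r i)) := by
          rw [Finset.mul_sum]
          exact Finset.sum_congr rfl fun j _ => by ring
      _ ≤ ∑ j, r i j * T j := hstep
end
end

section
/- The classical Hawk–Dove game (2×2 symmetric game with payoff matrix [[ (V-C)/2, V ], [ 0, V/2 ]] where 0 < V < C) has no strategy that is evolutionarily stable against multiple mutations. -/
open Finset Set

noncomputable section

lemma pure'_mem_aux {k : ℕ} (i : Fin k) : pure' i ∈ Δ' k := by
  constructor
  · intro j
    simp only [pure']
    split <;> norm_num
  · simp [pure']

theorem stmt_17 (V C : ℝ) (hV : 0 < V) (hVC : V < C) :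
    let U : Fin 2 → Fin 2 → ℝ := ![![(V - C)/2, V], ![0, V/2]]
    ∀ p ∈ Δ' 2, ¬ (∀ m : ℕ, 2 ≤ m → StableAgainst U m p) := by
  intro U p hp h
  have hU : U = ![![(V - C)/2, V], ![0, V/2]] := rfl
  obtain ⟨hpos, hsum⟩ := hp
  have hsum2 : p 0 + p 1 = 1 := by simpa [Fin.sum_univ_two] using hsum
  have h0 := hpos 0
  have h1 := hpos 1
  have hC : 0 < C := hV.trans hVC
  have hst := h 2 le_rfl
  rcases eq_or_lt_of_le h0 with hz0 | hpos0
  · -- p = Dove, invade with Hawk = pure' 0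
    have hp0 : p 0 = 0 := hz0.symm
    have hp1 : p 1 = 1 := by linarith
    obtain ⟨e, ⟨he0, _⟩, hb⟩ := hst ![pure' 0, pure' 0]
      (by intro i; fin_cases i <;> exact pure'_mem_aux _)
      (by
        intro i
        fin_cases i <;>
          · intro heq
            have h' := congrFun heq 0
            simp [pure', hp0] at h')
    set δ := min e (V / (4 * C)) with hδdef
    have hδ0 : 0 < δ := lt_min he0 (by positivity)
    have hδe : δ ≤ e := min_le_left _ _
    have hδV : δ * (4 * C) ≤ V := by
      have := min_le_right e (V / (4 * C))
      calc δ * (4 * C) ≤ (V / (4 * C)) * (4 * C) := by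
            apply mul_le_mul_of_nonneg_right this (by positivity)
        _ = V := by field_simp
    have key := hb (fun _ => δ) (fun i => ⟨hδ0, hδe⟩) 0
    simp only [payoff, mix, Fin.sum_univ_two, hU, pure', Matrix.cons_val_zero,
      Matrix.cons_val_one, Matrix.head_cons, hp0, hp1] at key
    norm_num at key
    nlinarith [key, hδV, hδ0]
  · rcases eq_or_lt_of_le h1 with hz1 | hpos1
    · -- p = Hawk, invade with Dove = pure' 1
      have hp1 : p 1 = 0 := hz1.symm
      have hp0 : p 0 = 1 := by linarith
      obtain ⟨e, ⟨he0, _⟩, hb⟩ := hst ![pure' 1, pure' 1]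
        (by intro i; fin_cases i <;> exact pure'_mem_aux _)
        (by
          intro i
          fin_cases i <;>
            · intro heq
              have h' := congrFun heq 1
              simp [pure', hp1] at h')
      set δ := min e (min (1/4) ((C - V) / (4 * V))) with hδdef
      have hδ0 : 0 < δ :=
        lt_min he0 (lt_min (by norm_num) (div_pos (by linarith) (by positivity)))
      have hδe : δ ≤ e := min_le_left _ _
      have hδ14 : δ ≤ 1/4 := le_trans (min_le_right _ _) (min_le_left _ _)
      have hδCV : δ * (4 * V) ≤ C - V := by
        have := le_trans (min_le_right e _) (min_le_right (1/4) ((C - V) / (4 * V)))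
        calc δ * (4 * V) ≤ ((C - V) / (4 * V)) * (4 * V) := by
              apply mul_le_mul_of_nonneg_right this (by positivity)
          _ = C - V := by field_simp
      have key := hb (fun _ => δ) (fun i => ⟨hδ0, hδe⟩) 0
      simp only [payoff, mix, Fin.sum_univ_two, hU, pure', Matrix.cons_val_zero,
        Matrix.cons_val_one, Matrix.head_cons, hp0, hp1] at key
      norm_num at key
      nlinarith [key, hδCV, hδ14, hδ0, hV, hVC]
    · -- interior p, invade with both pure strategies in proportions p 0 : p 1
      obtain ⟨e, ⟨he0, he1⟩, hb⟩ := hst ![pure' 0, pure' 1]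
        (by intro i; fin_cases i <;> exact pure'_mem_aux _)
        (by
          intro i
          fin_cases i
          · intro heq
            have h' := congrFun heq 1
            simp [pure'] at h'
            linarith
          · intro heq
            have h' := congrFun heq 0
            simp [pure'] at h'
            linarith)
      have hp0lt : p 0 < 1 := by linarith
      have hp1lt : p 1 < 1 := by linarith
      set ε : Fin 2 → ℝ := ![e * p 0, e * p 1] with hεdef
      have hε : ∀ i, ε i ∈ Set.Ioc (0:ℝ) e := by
        intro i
        fin_cases i
        · refine ⟨?_, ?_⟩
          · show (0:ℝ) < e * p 0
            positivity
          · show e * p 0 ≤ e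
            nlinarith
        · refine ⟨?_, ?_⟩
          · show (0:ℝ) < e * p 1
            positivity
          · show e * p 1 ≤ e
            nlinarith
      have hmix : mix p ![pure' 0, pure' 1] ε = p := by
        funext j
        fin_cases j
        · simp only [mix, Fin.sum_univ_two, hεdef, pure', Matrix.cons_val_zero,
            Matrix.cons_val_one, Matrix.head_cons]
          norm_num
          linear_combination (-(e * p 0)) * hsum2
        · simp only [mix, Fin.sum_univ_two, hεdef, pure', Matrix.cons_val_zero,
            Matrix.cons_val_one, Matrix.head_cons]
          norm_num
          linear_combination (-(e * p 1)) * hsum2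
      have key0 := hb ε hε 0
      have key1 := hb ε hε 1
      rw [hmix] at key0 key1
      simp only [payoff, Fin.sum_univ_two, hU, pure', Matrix.cons_val_zero,
        Matrix.cons_val_one, Matrix.head_cons] at key0 key1
      norm_num at key0 key1
      have e1 : p 1 = 1 - p 0 := by linarith
      rw [e1] at key0 key1
      nlinarith [key0, key1, mul_nonneg (mul_nonneg hpos0.le
        (by linarith : (0:ℝ) ≤ 1 - p 0))
        (sq_nonneg (p 0 * ((V - C)/2) + (1 - p 0) * V - (1 - p 0) * (V/2)))]

end
end
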